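/- arXiv:1011.3860 — 3 statements merged into one kernel-verified Lean document; each statement's English description precedes it below -/
import Mathlib

section
/- Y_n equals the set Z of all points p ∈ P_n satisfying the following condition: for every pair of nonempty subsets I ⊆ J ⊆ [n], if [a_i^I]_{i∈I} and [a_j^J]_{j∈J} denote the I- and J-components of p, then the vectors (a_i^I)_{i∈I} and (a_i^J)_{i∈I} of ℂ^I are linearly dependent (this condition is independent of the choice of homogeneous representatives). In particular Z is closed in P_n and contains ρ(T_n). -/
noncomputable section

open Projectivization

instance projTopology {K V : Type*} [DivisionRing K] [AddCommGroup V] [Module K V]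
    [TopologicalSpace V] : TopologicalSpace (Projectivization K V) :=
  inferInstanceAs (TopologicalSpace (Quotient (projectivizationSetoid K V)))

/-- The index type of nonempty subsets of `ι`. -/
abbrev NES (ι : Type) := {I : Set ι // I.Nonempty}

/-- The ambient product `P = ∏_{∅ ≠ I ⊆ ι} ℙ^I` of projective spaces. -/
abbrev PSp (ι : Type) := (I : NES ι) → Projectivization ℂ (↥I.1 → ℂ)

/-- The subset of `ℙ^ι` consisting of points all of whose homogeneous coordinates
are nonzero (an algebraic torus). -/
def torusSet (ι : Type) : Set (Projectivization ℂ (ι → ℂ)) := {x | ∀ i, x.rep i ≠ 0}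

open Classical in
/-- The `i`-th homogeneous coordinate (for the chosen representative `rep`) of the
`K`-component of a point `p ∈ P`; junk value `0` if `i ∉ K` or `K = ∅`. -/
def pcoord (ι : Type) (p : PSp ι) (K : Set ι) (i : ι) : ℂ :=
  if h : K.Nonempty ∧ i ∈ K then (p ⟨K, h.1⟩).rep ⟨i, h.2⟩ else 0

lemma pcoord_exists_ne (ι : Type) (p : PSp ι) (K : Set ι) (hK : K.Nonempty) :
    ∃ i, i ∈ K ∧ pcoord ι p K i ≠ 0 := by
  obtain ⟨x, hx⟩ := Function.ne_iff.mp (Projectivization.rep_nonzero (p ⟨K, hK⟩))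
  refine ⟨x.1, x.2, ?_⟩
  rw [pcoord, dif_pos ⟨hK, x.2⟩]
  simpa using hx

/-- The map `ρ` from the torus to `P`, whose `I`-component is given by restricting
the homogeneous coordinates. -/
def rho (ι : Type) (x : ↥(torusSet ι)) : PSp ι := fun I =>
  Projectivization.mk ℂ (fun i : ↥I.1 => x.1.rep i.1) <| by
    obtain ⟨i, hi⟩ := I.2
    intro h0
    exact x.2 i (by simpa using congrFun h0 ⟨i, hi⟩)

/-- `Y`, the closure of `ρ(T)` in `P`. -/
def Yn (ι : Type) : Set (PSp ι) := closure (Set.range (rho ι))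

/-- The chain of a point `p ∈ P`: `chainK ι p 0 = univ` (this is `K₁` in the paper)
and `chainK ι p (ℓ+1)` (i.e. `K_{ℓ+2}`) consists of those `k ∈ chainK ι p ℓ` for which the
`k`-th homogeneous coordinate of the `chainK ι p ℓ`-component of `p` vanishes. -/
def chainK (ι : Type) (p : PSp ι) : ℕ → Set ι
  | 0 => Set.univ
  | ℓ + 1 => {k ∈ chainK ι p ℓ | pcoord ι p (chainK ι p ℓ) k = 0}

/-- A chain of subsets `ι = K 0 ⊋ K 1 ⊋ ⋯ ⊋ K m = ∅` (written `K₁ ⊋ ⋯ ⊋ K_{m+1}` in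
the paper); we extend it by `∅` beyond the `m`-th step so that it is determined by
the function `K`. -/
structure SubsetChain (ι : Type) where
  m : ℕ
  K : ℕ → Set ι
  first : K 0 = Set.univ
  strict : ∀ ℓ < m, K (ℓ + 1) ⊂ K ℓ
  last : K m = ∅
  beyond : ∀ ℓ, m ≤ ℓ → K ℓ = ∅

/-- The piece `O_{K₁,…,K_{m+1}}` of `Y`: those points of `Y` whose chain is the given one. -/
def Ochain (ι : Type) (c : SubsetChain ι) : Set (PSp ι) :=
  {p ∈ Yn ι | ∀ ℓ ≤ c.m, chainK ι p ℓ = c.K ℓ}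

/-- The subset `D_{K₁,…,K_{m+1}}` of `Y`: the points whose `K_ℓ`-component has vanishing
coordinates indexed by `K_{ℓ+1}`. -/
def Dchain (ι : Type) (c : SubsetChain ι) : Set (PSp ι) :=
  {p ∈ Yn ι | ∀ ℓ < c.m, ∀ k ∈ c.K (ℓ + 1), pcoord ι p (c.K ℓ) k = 0}

/-- The action of an element of the torus on a point of `P`:
`[a]·([b_i]_{i ∈ I})_I = ([a_i b_i]_{i ∈ I})_I`. -/
def act (ι : Type) (t : ↥(torusSet ι)) (p : PSp ι) : PSp ι := fun I =>
  Projectivization.mk ℂ (fun i : ↥I.1 => t.1.rep i.1 * (p I).rep i) <| by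
    intro h0
    obtain ⟨i, hi⟩ := Function.ne_iff.mp (Projectivization.rep_nonzero (p I))
    have h : t.1.rep i.1 * (p I).rep i = 0 := by simpa using congrFun h0 i
    exact mul_ne_zero (t.2 i.1) (by simpa using hi) h

/-- The action of a permutation `w` of `ι` on `P`: the `w(I)`-component of `w·p` is
`[a^I_{w⁻¹(j)}]_{j ∈ w(I)}`; equivalently the `J`-component of `w·p` is
`[a^{w⁻¹(J)}_{w⁻¹(j)}]_{j ∈ J}`. -/
def permAct (ι : Type) (w : Equiv.Perm ι) (p : PSp ι) : PSp ι := fun J =>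
  Projectivization.mk ℂ (fun j : ↥J.1 => pcoord ι p (⇑(w⁻¹) '' J.1) (w⁻¹ j.1)) <| by
    have hK : ((⇑(w⁻¹) : ι → ι) '' J.1).Nonempty := J.2.image _
    obtain ⟨i, hi, hne⟩ := pcoord_exists_ne ι p _ hK
    obtain ⟨j, hj, hji⟩ := hi
    intro h0
    apply hne
    have h := congrFun h0 ⟨j, hj⟩
    simpa [hji] using h

/-- The set `Z` of points of `P` all of whose pairs of nested components are compatible:
for `∅ ≠ I ⊆ J ⊆ [n]`, the vectors `(a^I_i)_{i ∈ I}` and `(a^J_i)_{i ∈ I}` are linearly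
dependent. -/
def Zset (n : ℕ) : Set (PSp (Fin n)) :=
  {p | ∀ I J : Set (Fin n), I.Nonempty → I ⊆ J →
    ∃ c d : ℂ, ¬(c = 0 ∧ d = 0) ∧
      ∀ i ∈ I, c * pcoord (Fin n) p I i + d * pcoord (Fin n) p J i = 0}

section Aux

variable {V : Type*} [AddCommGroup V] [Module ℂ V] [TopologicalSpace V]

lemma pcoord_spec (ι : Type) (p : PSp ι) {K : Set ι} (hK : K.Nonempty) {i : ι} (hi : i ∈ K) :
    pcoord ι p K i = (p ⟨K, hK⟩).rep ⟨i, hi⟩ := dif_pos ⟨hK, hi⟩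

lemma continuous_projMk : Continuous (Quotient.mk'' : {v : V // v ≠ 0} → Projectivization ℂ V) :=
  continuous_quotient_mk'

open Filter Topology in
lemma tendsto_projMk {f : ℕ → V} {v : V} (hf : ∀ k, f k ≠ 0) (hv : v ≠ 0)
    (h : Tendsto f atTop (𝓝 v)) :
    Tendsto (fun k => Projectivization.mk ℂ (f k) (hf k)) atTop
      (𝓝 (Projectivization.mk ℂ v hv)) := by
  have h1 : Tendsto (fun k => (⟨f k, hf k⟩ : {v : V // v ≠ 0})) atTop (𝓝 ⟨v, hv⟩) := by
    exact tendsto_subtype_rng.2 h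
  exact (continuous_projMk.tendsto _).comp h1

lemma isOpenMap_projMk [ContinuousSMul ℂ V] :
    IsOpenMap (Quotient.mk'' : {v : V // v ≠ 0} → Projectivization ℂ V) := by
  intro U hU
  have : IsOpen ((Quotient.mk'' : {v : V // v ≠ 0} → Projectivization ℂ V) ⁻¹'
      (Quotient.mk'' '' U)) := by
    have heq : (Quotient.mk'' : {v : V // v ≠ 0} → Projectivization ℂ V) ⁻¹'
        (Quotient.mk'' '' U) = ⋃ c : ℂˣ,
          (fun x : {v : V // v ≠ 0} => (⟨(c : ℂ) • x.1, smul_ne_zero c.ne_zero x.2⟩ :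
            {v : V // v ≠ 0})) ⁻¹' U := by
      ext x
      simp only [Set.mem_preimage, Set.mem_image, Set.mem_iUnion]
      constructor
      · rintro ⟨y, hyU, hy⟩
        have : Projectivization.mk ℂ y.1 y.2 = Projectivization.mk ℂ x.1 x.2 := hy
        obtain ⟨c, hc⟩ := (Projectivization.mk_eq_mk_iff ℂ _ _ y.2 x.2).1 this
        refine ⟨c, ?_⟩
        have : (⟨(c : ℂ) • x.1, smul_ne_zero c.ne_zero x.2⟩ : {v : V // v ≠ 0}) = y :=
          Subtype.ext hc
        rwa [this]
      · rintro ⟨c, hc⟩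
        refine ⟨_, hc, ?_⟩
        show Projectivization.mk ℂ ((c : ℂ) • x.1) _ = Projectivization.mk ℂ x.1 x.2
        rw [Projectivization.mk_eq_mk_iff]
        exact ⟨c, rfl⟩
    rw [heq]
    exact isOpen_iUnion fun c => hU.preimage
      ((continuous_const.smul continuous_subtype_val).subtype_mk _)
  exact this

end Aux
section Aux2

lemma isClosed_minor {α β : Type*} (a1 a2 : α) (b1 b2 : β) :
    IsClosed {q : Projectivization ℂ (α → ℂ) × Projectivization ℂ (β → ℂ) |
      q.1.rep a1 * q.2.rep b1 = q.1.rep a2 * q.2.rep b2} := by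
  rw [← isOpen_compl_iff]
  have heq : {q : Projectivization ℂ (α → ℂ) × Projectivization ℂ (β → ℂ) |
      q.1.rep a1 * q.2.rep b1 = q.1.rep a2 * q.2.rep b2}ᶜ =
      Prod.map (Quotient.mk'') (Quotient.mk'') ''
      {x : {v : α → ℂ // v ≠ 0} × {v : β → ℂ // v ≠ 0} |
        x.1.1 a1 * x.2.1 b1 ≠ x.1.1 a2 * x.2.1 b2} := by
    ext q
    simp only [Set.mem_compl_iff, Set.mem_setOf_eq, Set.mem_image, Prod.exists, Prod.map]
    constructor
    · intro hq
      refine ⟨(⟨q.1.rep, q.1.rep_nonzero⟩, ⟨q.2.rep, q.2.rep_nonzero⟩), hq, ?_⟩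
      have h1 : (Quotient.mk'' ⟨q.1.rep, q.1.rep_nonzero⟩ : Projectivization ℂ (α → ℂ)) = q.1 :=
        q.1.mk_rep
      have h2 : (Quotient.mk'' ⟨q.2.rep, q.2.rep_nonzero⟩ : Projectivization ℂ (β → ℂ)) = q.2 :=
        q.2.mk_rep
      exact Prod.ext h1 h2
    · rintro ⟨⟨x, y⟩, hxy, hq⟩
      obtain ⟨c, hc⟩ := Projectivization.exists_smul_eq_mk_rep ℂ x.1 x.2
      obtain ⟨d, hd⟩ := Projectivization.exists_smul_eq_mk_rep ℂ y.1 y.2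
      have hq1 : q.1 = Projectivization.mk ℂ x.1 x.2 := by rw [← hq]; rfl
      have hq2 : q.2 = Projectivization.mk ℂ y.1 y.2 := by rw [← hq]; rfl
      rw [hq1, hq2, ← hc, ← hd]
      simp only [Pi.smul_apply, smul_eq_mul, Units.smul_def]
      intro h
      apply hxy
      have hcd : (c : ℂ) * d ≠ 0 := mul_ne_zero c.ne_zero d.ne_zero
      apply mul_left_cancel₀ hcd
      linear_combination h
  rw [heq]
  apply (isOpenMap_projMk.prodMap isOpenMap_projMk)
  have c1 : Continuous fun x : {v : α → ℂ // v ≠ 0} × {v : β → ℂ // v ≠ 0} => x.1.1 a1 :=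
    (continuous_apply a1).comp (continuous_subtype_val.comp continuous_fst)
  have c2 : Continuous fun x : {v : α → ℂ // v ≠ 0} × {v : β → ℂ // v ≠ 0} => x.1.1 a2 :=
    (continuous_apply a2).comp (continuous_subtype_val.comp continuous_fst)
  have d1 : Continuous fun x : {v : α → ℂ // v ≠ 0} × {v : β → ℂ // v ≠ 0} => x.2.1 b1 :=
    (continuous_apply b1).comp (continuous_subtype_val.comp continuous_snd)
  have d2 : Continuous fun x : {v : α → ℂ // v ≠ 0} × {v : β → ℂ // v ≠ 0} => x.2.1 b2 :=
    (continuous_apply b2).comp (continuous_subtype_val.comp continuous_snd)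
  have : {x : {v : α → ℂ // v ≠ 0} × {v : β → ℂ // v ≠ 0} |
      x.1.1 a1 * x.2.1 b1 ≠ x.1.1 a2 * x.2.1 b2} =
      (fun x : {v : α → ℂ // v ≠ 0} × {v : β → ℂ // v ≠ 0} =>
        x.1.1 a1 * x.2.1 b1 - x.1.1 a2 * x.2.1 b2) ⁻¹' {(0 : ℂ)}ᶜ := by
    ext x
    simp [sub_eq_zero]
  rw [this]
  exact isClosed_singleton.isOpen_compl.preimage ((c1.mul d1).sub (c2.mul d2))

end Aux2
section Aux3

lemma zset_iff {n : ℕ} (p : PSp (Fin n)) : p ∈ Zset n ↔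
    ∀ I J : Set (Fin n), I.Nonempty → I ⊆ J → ∀ i ∈ I, ∀ j ∈ I,
      pcoord (Fin n) p I i * pcoord (Fin n) p J j =
        pcoord (Fin n) p I j * pcoord (Fin n) p J i := by
  constructor
  · intro hp I J hI hIJ i hi j hj
    obtain ⟨c, d, hcd, h⟩ := hp I J hI hIJ
    by_cases hc : c = 0
    · have hd : d ≠ 0 := fun h0 => hcd ⟨hc, h0⟩
      have hJi : pcoord (Fin n) p J i = 0 := by
        have := h i hi; rw [hc] at this
        simp only [zero_mul, zero_add] at this
        exact (mul_eq_zero.mp this).resolve_left hd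
      have hJj : pcoord (Fin n) p J j = 0 := by
        have := h j hj; rw [hc] at this
        simp only [zero_mul, zero_add] at this
        exact (mul_eq_zero.mp this).resolve_left hd
      rw [hJi, hJj]; ring
    · have h1 := h i hi
      have h2 := h j hj
      apply mul_left_cancel₀ hc
      linear_combination pcoord (Fin n) p J j * h1 - pcoord (Fin n) p J i * h2
  · intro hp I J hI hIJ
    obtain ⟨i0, hi0, hne⟩ := pcoord_exists_ne (Fin n) p I hI
    refine ⟨pcoord (Fin n) p J i0, -pcoord (Fin n) p I i0, fun h => hne (by
      simpa using congrArg Neg.neg h.2), fun i hi => ?_⟩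
    have := hp I J hI hIJ i hi i0 hi0
    linear_combination this

lemma range_rho_subset_zset (n : ℕ) : Set.range (rho (Fin n)) ⊆ Zset n := by
  rintro _ ⟨x, rfl⟩ I J hI hIJ
  have hJ : J.Nonempty := hI.mono hIJ
  obtain ⟨c, hc⟩ := Projectivization.exists_smul_eq_mk_rep ℂ
    (fun i : ↥I => x.1.rep i.1) (by
      obtain ⟨i, hi⟩ := hI
      intro h0
      exact x.2 i (by simpa using congrFun h0 ⟨i, hi⟩))
  obtain ⟨d, hd⟩ := Projectivization.exists_smul_eq_mk_rep ℂ
    (fun j : ↥J => x.1.rep j.1) (by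
      obtain ⟨j, hj⟩ := hJ
      intro h0
      exact x.2 j (by simpa using congrFun h0 ⟨j, hj⟩))
  refine ⟨(d : ℂ), -(c : ℂ), fun h => d.ne_zero h.1, fun i hi => ?_⟩
  have h1 : pcoord (Fin n) (rho (Fin n) x) I i = (c : ℂ) * x.1.rep i := by
    rw [pcoord_spec (Fin n) _ hI hi]
    show (rho (Fin n) x ⟨I, hI⟩).rep ⟨i, hi⟩ = _
    rw [rho, ← hc]
    rfl
  have h2 : pcoord (Fin n) (rho (Fin n) x) J i = (d : ℂ) * x.1.rep i := by
    rw [pcoord_spec (Fin n) _ hJ (hIJ hi)]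
    show (rho (Fin n) x ⟨J, hJ⟩).rep ⟨i, hIJ hi⟩ = _
    rw [rho, ← hd]
    rfl
  rw [h1, h2]
  ring

lemma isClosed_zset (n : ℕ) : IsClosed (Zset n) := by
  have heq : Zset n = ⋂ (I : Set (Fin n)), ⋂ (J : Set (Fin n)), ⋂ (hI : I.Nonempty),
      ⋂ (hIJ : I ⊆ J), ⋂ (i : Fin n), ⋂ (hi : i ∈ I), ⋂ (j : Fin n), ⋂ (hj : j ∈ I),
      (fun p : PSp (Fin n) => (p ⟨I, hI⟩, p ⟨J, hI.mono hIJ⟩)) ⁻¹'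
        {q : Projectivization ℂ (↥I → ℂ) × Projectivization ℂ (↥J → ℂ) |
          q.1.rep ⟨i, hi⟩ * q.2.rep ⟨j, hIJ hj⟩ = q.1.rep ⟨j, hj⟩ * q.2.rep ⟨i, hIJ hi⟩} := by
    ext p
    simp only [Set.mem_iInter, Set.mem_preimage, Set.mem_setOf_eq]
    rw [zset_iff]
    constructor
    · intro h I J hI hIJ i hi j hj
      have := h I J hI hIJ i hi j hj
      rwa [pcoord_spec (Fin n) p hI hi, pcoord_spec (Fin n) p hI hj,
        pcoord_spec (Fin n) p (hI.mono hIJ) (hIJ hi),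
        pcoord_spec (Fin n) p (hI.mono hIJ) (hIJ hj)] at this
    · intro h I J hI hIJ i hi j hj
      have := h I J hI hIJ i hi j hj
      rwa [pcoord_spec (Fin n) p hI hi, pcoord_spec (Fin n) p hI hj,
        pcoord_spec (Fin n) p (hI.mono hIJ) (hIJ hi),
        pcoord_spec (Fin n) p (hI.mono hIJ) (hIJ hj)]
  rw [heq]
  refine isClosed_iInter fun I => isClosed_iInter fun J => isClosed_iInter fun hI =>
    isClosed_iInter fun hIJ => isClosed_iInter fun i => isClosed_iInter fun hi =>
    isClosed_iInter fun j => isClosed_iInter fun hj => ?_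
  exact (isClosed_minor _ _ _ _).preimage
    ((continuous_apply (⟨I, hI⟩ : NES (Fin n))).prodMk
      (continuous_apply (⟨J, hI.mono hIJ⟩ : NES (Fin n))))

end Aux3
section Aux4

open Filter Topology

lemma chainK_mono (ι : Type) (p : PSp ι) : ∀ {a b : ℕ}, a ≤ b → chainK ι p b ⊆ chainK ι p a := by
  intro a b hab
  induction b with
  | zero => rw [Nat.le_zero.mp hab]
  | succ m ih =>
    rcases Nat.lt_or_ge a (m+1) with h | h
    · exact fun k hk => ih (by omega) hk.1
    · have : a = m + 1 := by omega
      rw [this]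

lemma chainK_fin_empty (n : ℕ) (p : PSp (Fin n)) : chainK (Fin n) p n = ∅ := by
  have key : ∀ ℓ : ℕ, (chainK (Fin n) p ℓ).ncard ≤ n - ℓ := by
    intro ℓ
    induction ℓ with
    | zero => simp [chainK, Set.ncard_univ]
    | succ m ih =>
      by_cases h : (chainK (Fin n) p m).Nonempty
      · have hss : chainK (Fin n) p (m+1) ⊂ chainK (Fin n) p m := by
          refine ⟨chainK_mono (Fin n) p (Nat.le_succ m), ?_⟩
          obtain ⟨i, hi, hne⟩ := pcoord_exists_ne (Fin n) p _ h
          intro hsub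
          exact hne (hsub hi).2
        have hlt := Set.ncard_lt_ncard hss (Set.toFinite _)
        omega
      · rw [Set.not_nonempty_iff_eq_empty] at h
        have : chainK (Fin n) p (m+1) = ∅ :=
          Set.eq_empty_of_subset_empty (h ▸ chainK_mono (Fin n) p (Nat.le_succ m))
        simp [this]
  have := key n
  simp only [Nat.sub_self, Nat.le_zero] at this
  exact (Set.ncard_eq_zero (Set.toFinite _)).mp this

lemma pcoord_ne_zero_of_boundary (ι : Type) (p : PSp ι) {ℓ : ℕ} {i : ι}
    (hi : i ∈ chainK ι p ℓ) (hni : i ∉ chainK ι p (ℓ+1)) :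
    pcoord ι p (chainK ι p ℓ) i ≠ 0 := by
  intro h0
  exact hni ⟨hi, h0⟩

lemma chain_max (n : ℕ) (p : PSp (Fin n)) (S : Set (Fin n)) (hS : S.Nonempty) :
    ∃ ℓ : ℕ, S ⊆ chainK (Fin n) p ℓ ∧ ¬ S ⊆ chainK (Fin n) p (ℓ+1) ∧
      ∀ ℓ', S ⊆ chainK (Fin n) p ℓ' → ℓ' ≤ ℓ := by
  classical
  have hex : ∃ ℓ, ¬ S ⊆ chainK (Fin n) p (ℓ+1) := by
    refine ⟨n, fun hsub => ?_⟩
    obtain ⟨i, hi⟩ := hS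
    have : i ∈ chainK (Fin n) p n := chainK_mono (Fin n) p (Nat.le_succ n) (hsub hi)
    rw [chainK_fin_empty] at this
    exact this
  refine ⟨Nat.find hex, ?_, Nat.find_spec hex, ?_⟩
  · rcases h : Nat.find hex with _ | m
    · intro k _; exact Set.mem_univ k
    · have := Nat.find_min hex (show m < Nat.find hex by omega)
      exact not_not.mp this
  · intro ℓ' hℓ'
    by_contra hc
    push_neg at hc
    exact Nat.find_spec hex (hℓ'.trans (chainK_mono (Fin n) p (by omega)))

end Aux4
section Main

open Filter Topology

lemma zset_subset_yn (n : ℕ) (hn : 1 ≤ n) : Zset n ⊆ Yn (Fin n) := by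
  classical
  intro p hp
  set K : ℕ → Set (Fin n) := chainK (Fin n) p with hKdef
  have hlev : ∀ i : Fin n, ∃ ℓ, {i} ⊆ K ℓ ∧ ¬ {i} ⊆ K (ℓ+1) ∧ ∀ ℓ', {i} ⊆ K ℓ' → ℓ' ≤ ℓ :=
    fun i => chain_max n p {i} ⟨i, rfl⟩
  set lev : Fin n → ℕ := fun i => (hlev i).choose with hlevdef
  have hlev1 : ∀ i, i ∈ K (lev i) := fun i => (hlev i).choose_spec.1 rfl
  have hlev2 : ∀ i, i ∉ K (lev i + 1) := fun i h =>
    (hlev i).choose_spec.2.1 (Set.singleton_subset_iff.mpr h)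
  have hlev3 : ∀ i, pcoord (Fin n) p (K (lev i)) i ≠ 0 :=
    fun i => pcoord_ne_zero_of_boundary (Fin n) p (hlev1 i) (hlev2 i)
  set ε : ℕ → ℂ := fun k => ((1 / (k + 1 : ℝ) : ℝ) : ℂ) with hεdef
  have hε : ∀ k, ε k ≠ 0 := by
    intro k
    simp only [hεdef, ne_eq, Complex.ofReal_eq_zero]
    positivity
  have hε0 : Tendsto ε atTop (𝓝 0) := by
    have h1 : Tendsto (fun k : ℕ => 1 / (k + 1 : ℝ)) atTop (𝓝 0) :=
      tendsto_one_div_add_atTop_nhds_zero_nat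
    have h2 : Tendsto (fun k : ℕ => ((1 / (k + 1 : ℝ) : ℝ) : ℂ)) atTop (𝓝 ((0 : ℝ) : ℂ)) :=
      (Complex.continuous_ofReal.tendsto 0).comp h1
    simpa [hεdef] using h2
  set x : ℕ → Fin n → ℂ := fun k i => ε k ^ lev i * pcoord (Fin n) p (K (lev i)) i with hxdef
  have hxne : ∀ k i, x k i ≠ 0 := fun k i => mul_ne_zero (pow_ne_zero _ (hε k)) (hlev3 i)
  have i0 : Fin n := ⟨0, hn⟩
  have hx0 : ∀ k, x k ≠ 0 := fun k h => hxne k i0 (congrFun h i0)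
  have tor : ∀ k, Projectivization.mk ℂ (x k) (hx0 k) ∈ torusSet (Fin n) := by
    intro k i
    obtain ⟨c, hc⟩ := Projectivization.exists_smul_eq_mk_rep ℂ (x k) (hx0 k)
    rw [← hc]
    simp only [Pi.smul_apply, Units.smul_def, smul_eq_mul]
    exact mul_ne_zero c.ne_zero (hxne k i)
  set t : ℕ → ↥(torusSet (Fin n)) := fun k => ⟨_, tor k⟩ with htdef
  suffices h : Tendsto (fun k => rho (Fin n) (t k)) atTop (𝓝 p) by
    exact mem_closure_of_tendsto h (Filter.Eventually.of_forall fun k => Set.mem_range_self _)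
  rw [tendsto_pi_nhds]
  rintro ⟨I, hI⟩
  obtain ⟨ℓ0, hIK, hInK, _⟩ := chain_max n p I hI
  obtain ⟨i1, hi1I, hi1n⟩ := Set.not_subset.mp hInK
  have hKne : (K ℓ0).Nonempty := ⟨i1, hIK hi1I⟩
  have hw1 : pcoord (Fin n) p (K ℓ0) i1 ≠ 0 :=
    pcoord_ne_zero_of_boundary (Fin n) p (hIK hi1I) hi1n
  set w : ↥I → ℂ := fun i => pcoord (Fin n) p (K ℓ0) i.1 with hwdef
  have hwne : w ≠ 0 := fun h => hw1 (congrFun h ⟨i1, hi1I⟩)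
  have hge : ∀ i : ↥I, ℓ0 ≤ lev i.1 := fun i =>
    (hlev i.1).choose_spec.2.2 ℓ0 (Set.singleton_subset_iff.mpr (hIK i.2))
  set v : ℕ → ↥I → ℂ := fun k i => ε k ^ (lev i.1 - ℓ0) * pcoord (Fin n) p (K (lev i.1)) i.1
    with hvdef
  have hvne : ∀ k (i : ↥I), v k i ≠ 0 := fun k i =>
    mul_ne_zero (pow_ne_zero _ (hε k)) (hlev3 i.1)
  have hv0 : ∀ k, v k ≠ 0 := fun k h => hvne k ⟨i1, hi1I⟩ (congrFun h _)
  have hvw : Tendsto v atTop (𝓝 w) := by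
    rw [tendsto_pi_nhds]
    intro i
    rcases eq_or_lt_of_le (hge i) with heq | hlt
    · have hconst : ∀ k, v k i = w i := by
        intro k
        simp only [hvdef, hwdef, ← heq, Nat.sub_self, pow_zero, one_mul]
      simp only [hconst]
      exact tendsto_const_nhds
    · have hwi : w i = 0 := by
        have hmem : i.1 ∈ K (ℓ0 + 1) := chainK_mono (Fin n) p hlt (hlev1 i.1)
        exact hmem.2
      rw [hwi]
      have h1 : Tendsto (fun k => ε k ^ (lev i.1 - ℓ0)) atTop (𝓝 0) := by
        have := hε0.pow (lev i.1 - ℓ0)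
        rwa [zero_pow (by omega)] at this
      have h2 := h1.mul_const (pcoord (Fin n) p (K (lev i.1)) i.1)
      simpa using h2
  have hcomp : ∀ k, rho (Fin n) (t k) ⟨I, hI⟩ = Projectivization.mk ℂ (v k) (hv0 k) := by
    intro k
    obtain ⟨c, hc⟩ := Projectivization.exists_smul_eq_mk_rep ℂ (x k) (hx0 k)
    show Projectivization.mk ℂ (fun i : ↥I => (t k).1.rep i.1) _ = _
    rw [Projectivization.mk_eq_mk_iff']
    refine ⟨(c : ℂ) * ε k ^ ℓ0, funext fun i => ?_⟩
    have hrep : (t k).1.rep i.1 = (c : ℂ) * x k i.1 := by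
      show (Projectivization.mk ℂ (x k) (hx0 k)).rep i.1 = _
      rw [← hc]
      simp [Units.smul_def]
    simp only [Pi.smul_apply, smul_eq_mul, hrep, hxdef, hvdef]
    rw [show ε k ^ lev i.1 = ε k ^ ℓ0 * ε k ^ (lev i.1 - ℓ0) by
      rw [← pow_add, Nat.add_sub_cancel' (hge i)]]
    ring
  simp only [hcomp]
  have hmkw : p ⟨I, hI⟩ = Projectivization.mk ℂ w hwne := by
    obtain ⟨c, d, hcd, h⟩ := hp I (K ℓ0) hI hIK
    have hcne : c ≠ 0 := by
      intro h0
      have hd : d ≠ 0 := fun h1 => hcd ⟨h0, h1⟩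
      have := h i1 hi1I
      rw [h0] at this
      simp only [zero_mul, zero_add] at this
      exact hw1 ((mul_eq_zero.mp this).resolve_left hd)
    conv_lhs => rw [← Projectivization.mk_rep (p ⟨I, hI⟩)]
    rw [Projectivization.mk_eq_mk_iff']
    refine ⟨-d/c, funext fun i => ?_⟩
    have hu : pcoord (Fin n) p I i.1 = (p ⟨I, hI⟩).rep i := pcoord_spec (Fin n) p hI i.2
    have h2 := h i.1 i.2
    simp only [Pi.smul_apply, smul_eq_mul, ← hu, hwdef]
    field_simp
    linear_combination -h2
  rw [hmkw]
  exact tendsto_projMk hv0 hwne hvw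

end Main

/-- Proposition 2.4 (Proposition `equationprop`): `Y_n` equals the set `Z` of points
satisfying the linear-dependence conditions; in particular `Z` is closed in `P_n` and
contains `ρ(T_n)`. -/
theorem stmt0 (n : ℕ) (hn : 1 ≤ n) :
    Yn (Fin n) = Zset n ∧ IsClosed (Zset n) ∧ Set.range (rho (Fin n)) ⊆ Zset n := by
  refine ⟨Set.Subset.antisymm ?_ (zset_subset_yn n hn), isClosed_zset n,
    range_rho_subset_zset n⟩
  exact closure_minimal (range_rho_subset_zset n) (isClosed_zset n)
end
end

section
/- Let p ∈ P_n have I-components [a_i^I]_{i∈I} and suppose that for all nonempty I ⊆ J ⊆ [n] the vectors (a_i^I)_{i∈I} and (a_i^J)_{i∈I} are linearly dependent. Define recursively K_1 = [n] and K_{ℓ+1} = {k ∈ K_ℓ : a_k^{K_ℓ} = 0}, and let m be minimal with K_{m+1} = ∅. Fix representatives (a_i^{K_s})_{i∈K_s} for 1 ≤ s ≤ m, and for t ∈ ℂ^× define q(t) = [a_1(t):⋯:a_n(t)] ∈ T_n by a_i(t) = t^s a_i^{K_s} whenever i ∈ K_s and i ∉ K_{s+1}. Then ρ(q(t)) tends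 to p in P_n as t → 0 (limit along nonzero t); in particular p lies in Y_n, the closure of ρ(T_n). -/
noncomputable section

open Projectivization

section Aux

open Filter Topology

lemma chainK_antitone (ι : Type) (p : PSp ι) {a b : ℕ} (hab : a ≤ b) :
    chainK ι p b ⊆ chainK ι p a := by
  induction b, hab using Nat.le_induction with
  | base => exact subset_rfl
  | succ b hab ih => exact fun k hk => ih hk.1

lemma pcoord_mem (ι : Type) (p : PSp ι) (I : NES ι) {i : ι} (hi : i ∈ I.1) :
    pcoord ι p I.1 i = (p I).rep ⟨i, hi⟩ := by
  rw [pcoord, dif_pos ⟨I.2, hi⟩]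

lemma tendsto_projmk {V : Type*} [AddCommGroup V] [Module ℂ V] [TopologicalSpace V]
    {α : Type*} {l : Filter α} {g : α → V} {v : V} (hv : v ≠ 0)
    (hg : Tendsto g l (𝓝 v)) {F : α → Projectivization ℂ V}
    (hF : ∀ᶠ a in l, ∃ h : g a ≠ 0, F a = Projectivization.mk ℂ (g a) h) :
    Tendsto F l (𝓝 (Projectivization.mk ℂ v hv)) := by
  classical
  set G : α → {w : V // w ≠ 0} := fun a => if h : g a ≠ 0 then ⟨g a, h⟩ else ⟨v, hv⟩ with hG
  have hGv : Tendsto G l (𝓝 ⟨v, hv⟩) := by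
    rw [tendsto_subtype_rng]
    refine hg.congr' ?_
    filter_upwards [hF] with a ha
    obtain ⟨h, -⟩ := ha
    simp [hG, h]
  have hcq : Tendsto (fun a => Projectivization.mk' ℂ (G a)) l
      (𝓝 (Projectivization.mk' ℂ ⟨v, hv⟩)) :=
    ((continuous_quotient_mk').tendsto _).comp hGv
  refine hcq.congr' ?_
  filter_upwards [hF] with a ha
  obtain ⟨h, hFa⟩ := ha
  simp [hG, h, hFa, Projectivization.mk'_eq_mk]

end Aux

open Filter Topology in
/-- Limit construction from the proof of Proposition 2.4: if `p ∈ P_n` satisfies the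
linear-dependence conditions, `K₁ ⊋ ⋯ ⊋ K_{m+1} = ∅` is its chain (here
`K_{s+1} = chainK (Fin n) p s`), `b ℓ` is a choice of homogeneous representative of the
`K_{ℓ+1}`-component of `p`, `σ i + 1` is the paper's index `s` with `i ∈ K_s \ K_{s+1}`,
and `q t i = t ^ (σ i + 1) * b (σ i) i`, then `q t` has all coordinates nonzero for
`t ≠ 0`, and `ρ(q(t)) → p` as `t → 0` along nonzero `t`; in particular `p ∈ Y_n`. -/
theorem stmt1 (n : ℕ) (hn : 1 ≤ n) (p : PSp (Fin n))
    (hdep : ∀ I J : Set (Fin n), I.Nonempty → I ⊆ J →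
      ∃ c d : ℂ, ¬(c = 0 ∧ d = 0) ∧
        ∀ i ∈ I, c * pcoord (Fin n) p I i + d * pcoord (Fin n) p J i = 0)
    (m : ℕ) (hm : chainK (Fin n) p m = ∅) (hm' : ∀ ℓ < m, (chainK (Fin n) p ℓ).Nonempty)
    (b : ℕ → Fin n → ℂ)
    (hb : ∀ ℓ < m, ∃ c : ℂ, c ≠ 0 ∧
      ∀ i ∈ chainK (Fin n) p ℓ, b ℓ i = c * pcoord (Fin n) p (chainK (Fin n) p ℓ) i)
    (σ : Fin n → ℕ)
    (hσ : ∀ i, i ∈ chainK (Fin n) p (σ i) ∧ i ∉ chainK (Fin n) p (σ i + 1))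
    (q : ℂ → Fin n → ℂ) (hq : ∀ t i, q t i = t ^ (σ i + 1) * b (σ i) i) :
    (∀ t : ℂ, t ≠ 0 → ∀ i, q t i ≠ 0) ∧
    (∀ f : ℂ → PSp (Fin n),
      (∀ t : ℂ, t ≠ 0 → ∀ I : NES (Fin n), ∃ d : ℂ, d ≠ 0 ∧
        ∀ i ∈ I.1, pcoord (Fin n) (f t) I.1 i = d * q t i) →
      Tendsto f (𝓝[≠] (0 : ℂ)) (𝓝 p)) ∧
    p ∈ Yn (Fin n) := by
  classical
  have hKempty : ∀ ℓ, m ≤ ℓ → chainK (Fin n) p ℓ = ∅ := fun ℓ hℓ =>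
    Set.subset_empty_iff.mp (hm ▸ chainK_antitone (Fin n) p hℓ)
  have hσm : ∀ i, σ i < m := by
    intro i
    by_contra h
    push_neg at h
    exact absurd ((hKempty (σ i) h) ▸ (hσ i).1) (Set.notMem_empty i)
  have hpc : ∀ i : Fin n, pcoord (Fin n) p (chainK (Fin n) p (σ i)) i ≠ 0 := by
    intro i h0
    exact (hσ i).2 ⟨(hσ i).1, h0⟩
  have hbne : ∀ i, b (σ i) i ≠ 0 := by
    intro i
    obtain ⟨c, hc, hbc⟩ := hb (σ i) (hσm i)
    rw [hbc i (hσ i).1]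
    exact mul_ne_zero hc (hpc i)
  have h1 : ∀ t : ℂ, t ≠ 0 → ∀ i, q t i ≠ 0 := by
    intro t ht i
    rw [hq]
    exact mul_ne_zero (pow_ne_zero _ ht) (hbne i)
  have h2 : ∀ f : ℂ → PSp (Fin n),
      (∀ t : ℂ, t ≠ 0 → ∀ I : NES (Fin n), ∃ d : ℂ, d ≠ 0 ∧
        ∀ i ∈ I.1, pcoord (Fin n) (f t) I.1 i = d * q t i) →
      Tendsto f (𝓝[≠] (0 : ℂ)) (𝓝 p) := by
    intro f hf
    rw [tendsto_pi_nhds]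
    intro I
    obtain ⟨i0, hi0I, hσi0⟩ : ∃ i ∈ I.1, σ i = sInf (σ '' I.1) := by
      have h := Nat.sInf_mem (I.2.image σ)
      obtain ⟨i, hi, hieq⟩ := h
      exact ⟨i, hi, hieq⟩
    set ℓ₀ := sInf (σ '' I.1) with hℓ₀
    have hle : ∀ i ∈ I.1, ℓ₀ ≤ σ i := fun i hi => Nat.sInf_le ⟨i, hi, rfl⟩
    set K := chainK (Fin n) p ℓ₀ with hK
    have hIK : I.1 ⊆ K := fun i hi => chainK_antitone (Fin n) p (hle i hi) (hσ i).1
    have hℓ₀m : ℓ₀ < m := by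
      by_contra h
      push_neg at h
      exact absurd ((hKempty ℓ₀ h) ▸ hIK hi0I) (Set.notMem_empty i0)
    obtain ⟨c', hc', hbc'⟩ := hb ℓ₀ hℓ₀m
    have hpKi0 : pcoord (Fin n) p K i0 ≠ 0 := by
      rw [hK, ← hσi0]
      exact hpc i0
    obtain ⟨c, d, hcd, hlin⟩ := hdep I.1 K I.2 hIK
    have hc : c ≠ 0 := by
      intro h0
      apply hpKi0
      have h := hlin i0 hi0I
      rw [h0, zero_mul, zero_add] at h
      have hd : d ≠ 0 := fun hd0 => hcd ⟨h0, hd0⟩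
      exact (mul_eq_zero.mp h).resolve_left hd
    have hd : d ≠ 0 := by
      intro h0
      obtain ⟨j, hj, hjne⟩ := pcoord_exists_ne (Fin n) p I.1 I.2
      apply hjne
      have h := hlin j hj
      rw [h0, zero_mul, add_zero] at h
      exact (mul_eq_zero.mp h).resolve_left hc
    set e := c' * (-c / d) with he_def
    have he : e ≠ 0 := mul_ne_zero hc' (div_ne_zero (neg_ne_zero.mpr hc) hd)
    have hKI : ∀ i ∈ I.1, pcoord (Fin n) p K i = (-c / d) * pcoord (Fin n) p I.1 i := by
      intro i hi
      have h := hlin i hi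
      field_simp
      linear_combination h
    have hv : ∀ i ∈ I.1,
        (if σ i = ℓ₀ then b ℓ₀ i else 0) = e * pcoord (Fin n) p I.1 i := by
      intro i hi
      by_cases hcase : σ i = ℓ₀
      · rw [if_pos hcase, hbc' i (hIK hi), hKI i hi, he_def]
        ring
      · rw [if_neg hcase]
        have h1le : ℓ₀ + 1 ≤ σ i := lt_of_le_of_ne (hle i hi) (Ne.symm hcase)
        have hmem : i ∈ chainK (Fin n) p (ℓ₀ + 1) :=
          chainK_antitone (Fin n) p h1le (hσ i).1
        have hK0 : pcoord (Fin n) p K i = 0 := hmem.2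
        have hI0 : pcoord (Fin n) p I.1 i = 0 := by
          have h := hlin i hi
          rw [hK0, mul_zero, add_zero] at h
          exact (mul_eq_zero.mp h).resolve_left hc
        rw [hI0, mul_zero]
    set v : ↥I.1 → ℂ := fun i => if σ i.1 = ℓ₀ then b ℓ₀ i.1 else 0 with hvdef
    have hv0 : v ≠ 0 := by
      intro h0
      have h := congrFun h0 ⟨i0, hi0I⟩
      rw [hvdef] at h
      simp only [if_pos hσi0] at h
      exact hbne i0 (by rw [hσi0]; simpa using h)
    have hmkv : Projectivization.mk ℂ v hv0 = p I := by
      have hrep : ∀ i : ↥I.1, v i = e * (p I).rep i := by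
        intro i
        rw [← pcoord_mem (Fin n) p I i.2]
        exact hv i.1 i.2
      conv_rhs => rw [← Projectivization.mk_rep (p I)]
      rw [Projectivization.mk_eq_mk_iff]
      refine ⟨Units.mk0 e he, ?_⟩
      funext i
      have := (hrep i).symm
      simpa [Units.smul_def] using this
    set g : ℂ → (↥I.1 → ℂ) := fun t i => (t ^ (ℓ₀ + 1))⁻¹ * q t i.1 with hgdef
    have hgl : Tendsto g (𝓝[≠] (0 : ℂ)) (𝓝 v) := by
      rw [tendsto_pi_nhds]
      intro i
      have hcont : Tendsto (fun t : ℂ => t ^ (σ i.1 - ℓ₀) * b (σ i.1) i.1) (𝓝 0)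
          (𝓝 ((0 : ℂ) ^ (σ i.1 - ℓ₀) * b (σ i.1) i.1)) :=
        ((continuous_pow _).mul continuous_const).tendsto 0
      have hval : (0 : ℂ) ^ (σ i.1 - ℓ₀) * b (σ i.1) i.1 = v i := by
        by_cases hcase : σ i.1 = ℓ₀
        · simp [hvdef, hcase, Nat.sub_self]
        · have hpos : 0 < σ i.1 - ℓ₀ :=
            Nat.sub_pos_of_lt (lt_of_le_of_ne (hle i.1 i.2) (Ne.symm hcase))
          simp [hvdef, hcase, zero_pow hpos.ne']
      have hT : Tendsto (fun t : ℂ => t ^ (σ i.1 - ℓ₀) * b (σ i.1) i.1) (𝓝[≠] (0 : ℂ))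
          (𝓝 (v i)) := hval ▸ hcont.mono_left nhdsWithin_le_nhds
      refine hT.congr' ?_
      filter_upwards [self_mem_nhdsWithin] with t ht
      have ht' : (t : ℂ) ≠ 0 := ht
      show t ^ (σ i.1 - ℓ₀) * b (σ i.1) i.1 = (t ^ (ℓ₀ + 1))⁻¹ * q t i.1
      rw [hq]
      have hpow : t ^ (σ i.1 + 1) = t ^ (ℓ₀ + 1) * t ^ (σ i.1 - ℓ₀) := by
        rw [← pow_add]
        congr 1
        have := hle i.1 i.2
        omega
      rw [hpow]
      field_simp
    have hFev : ∀ᶠ t in 𝓝[≠] (0 : ℂ), ∃ h : g t ≠ 0, f t I = Projectivization.mk ℂ (g t) h := by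
      filter_upwards [self_mem_nhdsWithin] with t ht
      have ht' : (t : ℂ) ≠ 0 := ht
      have hg0 : g t ≠ 0 := by
        intro h0
        have h := congrFun h0 ⟨i0, hi0I⟩
        exact (mul_ne_zero (inv_ne_zero (pow_ne_zero _ ht')) (h1 t ht' i0)) h
      refine ⟨hg0, ?_⟩
      obtain ⟨dI, hdI, hfd⟩ := hf t ht' I
      have hrepft : ∀ i : ↥I.1, (f t I).rep i = (dI * t ^ (ℓ₀ + 1)) * g t i := by
        intro i
        rw [← pcoord_mem (Fin n) (f t) I i.2, hfd i.1 i.2, hgdef]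
        field_simp
      conv_lhs => rw [← Projectivization.mk_rep (f t I)]
      rw [Projectivization.mk_eq_mk_iff]
      refine ⟨Units.mk0 (dI * t ^ (ℓ₀ + 1)) (mul_ne_zero hdI (pow_ne_zero _ ht')), ?_⟩
      funext i
      have := (hrepft i).symm
      simpa [Units.smul_def] using this
    have := tendsto_projmk hv0 hgl hFev
    rwa [hmkv] at this
  refine ⟨h1, h2, ?_⟩
  have hq0 : ∀ t : ℂ, t ≠ 0 → (q t) ≠ 0 := fun t ht h0 =>
    h1 t ht ⟨0, hn⟩ (congrFun h0 _)
  have htorus : ∀ (t : ℂ) (ht : t ≠ 0),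
      Projectivization.mk ℂ (q t) (hq0 t ht) ∈ torusSet (Fin n) := by
    intro t ht i
    obtain ⟨a, ha⟩ := Projectivization.exists_smul_eq_mk_rep ℂ (q t) (hq0 t ht)
    rw [← ha]
    simp only [Units.smul_def, Pi.smul_apply, smul_eq_mul]
    exact mul_ne_zero a.ne_zero (h1 t ht i)
  set f : ℂ → PSp (Fin n) := fun t =>
    if ht : t = 0 then p else rho (Fin n) ⟨_, htorus t ht⟩ with hfdef
  have hfhyp : ∀ t : ℂ, t ≠ 0 → ∀ I : NES (Fin n), ∃ d : ℂ, d ≠ 0 ∧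
      ∀ i ∈ I.1, pcoord (Fin n) (f t) I.1 i = d * q t i := by
    intro t ht I
    have hft : f t = rho (Fin n) ⟨_, htorus t ht⟩ := dif_neg ht
    set xt := Projectivization.mk ℂ (q t) (hq0 t ht) with hxt
    obtain ⟨a, ha⟩ := Projectivization.exists_smul_eq_mk_rep ℂ (q t) (hq0 t ht)
    have hne : (fun i : ↥I.1 => xt.rep i.1) ≠ 0 := by
      intro h0
      obtain ⟨j, hj⟩ := I.2
      exact htorus t ht j (congrFun h0 ⟨j, hj⟩)
    have hftI : f t I = Projectivization.mk ℂ (fun i : ↥I.1 => xt.rep i.1) hne := by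
      rw [hft]
      rfl
    obtain ⟨aI, haI⟩ := Projectivization.exists_smul_eq_mk_rep ℂ
      (fun i : ↥I.1 => xt.rep i.1) hne
    refine ⟨(aI : ℂ) * (a : ℂ), mul_ne_zero aI.ne_zero a.ne_zero, ?_⟩
    intro i hi
    rw [pcoord_mem (Fin n) (f t) I hi, hftI]
    have h1' : (Projectivization.mk ℂ (fun i : ↥I.1 => xt.rep i.1) hne).rep ⟨i, hi⟩
        = (aI : ℂ) * xt.rep i := by
      rw [← haI]
      simp [Units.smul_def]
    have h2' : xt.rep i = (a : ℂ) * q t i := by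
      rw [← ha]
      simp [Units.smul_def]
    rw [h1', h2']
    ring
  have htend := h2 f hfhyp
  have hev : ∀ᶠ t in 𝓝[≠] (0 : ℂ), f t ∈ Set.range (rho (Fin n)) := by
    filter_upwards [self_mem_nhdsWithin] with t ht
    have ht' : (t : ℂ) ≠ 0 := ht
    refine ⟨⟨_, htorus t ht'⟩, ?_⟩
    simp only [hfdef]
    rw [dif_neg ht']
  exact mem_closure_of_tendsto htend hev
end
end

section
/- The map ρ is a homeomorphism from T_n onto its image ρ(T_n); the image ρ(T_n) is an open (and dense) subset of Y_n; the T_n-action on Y_n preserves ρ(T_n) and is simply transitive on it; and ρ(T_n) equals O_{[n],∅}, the set of points of Y_n whose chain is [n] ⊋ ∅. -/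
noncomputable section

open Projectivization

section Stmt9Aux
set_option linter.unusedSectionVars false
set_option maxHeartbeats 1000000

namespace Stmt9Aux

variable {V : Type*} [AddCommGroup V] [Module ℂ V] [TopologicalSpace V] [ContinuousConstSMul ℂ V]

def qmap (V : Type*) [AddCommGroup V] [Module ℂ V] [TopologicalSpace V] :
    {v : V // v ≠ 0} → Projectivization ℂ V := Projectivization.mk' ℂ

lemma qmap_cont : Continuous (qmap V) := continuous_quotient_mk'

lemma qmap_surj : Function.Surjective (qmap V) := by
  intro x
  exact ⟨⟨x.rep, x.rep_nonzero⟩, x.mk_rep⟩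

lemma qmap_eq (v w : {v : V // v ≠ 0}) : qmap V v = qmap V w ↔ ∃ c : ℂˣ, (c : ℂ) • w.1 = v.1 := by
  show Projectivization.mk ℂ v.1 v.2 = Projectivization.mk ℂ w.1 w.2 ↔ _
  simpa [qmap, Projectivization.mk', Units.smul_def] using
    Projectivization.mk_eq_mk_iff ℂ v.1 w.1 v.2 w.2

lemma rep_mk (v : V) (hv : v ≠ 0) : ∃ c : ℂˣ, (Projectivization.mk ℂ v hv).rep = (c : ℂ) • v := by
  have h := (Projectivization.mk ℂ v hv).mk_rep
  rw [Projectivization.mk_eq_mk_iff] at h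
  obtain ⟨c, hc⟩ := h
  exact ⟨c, by rw [← hc, Units.smul_def]⟩

lemma qmap_isOpenMap : IsOpenMap (qmap V) := by
  intro W hW
  have hpre : qmap V ⁻¹' (qmap V '' W) =
      ⋃ c : ℂˣ, (fun v : {v : V // v ≠ 0} =>
        (⟨(c : ℂ) • v.1, smul_ne_zero c.ne_zero v.2⟩ : {v : V // v ≠ 0})) ⁻¹' W := by
    ext v
    simp only [Set.mem_preimage, Set.mem_image, Set.mem_iUnion]
    constructor
    · rintro ⟨w, hw, hq⟩
      obtain ⟨c, hc⟩ := (qmap_eq w v).mp hq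
      have : (⟨(c : ℂ) • v.1, smul_ne_zero c.ne_zero v.2⟩ : {v : V // v ≠ 0}) = w :=
        Subtype.ext hc
      exact ⟨c, by rw [this]; exact hw⟩
    · rintro ⟨c, hc⟩
      exact ⟨_, hc, (qmap_eq _ v).mpr ⟨c, rfl⟩⟩
  have : IsOpen (qmap V ⁻¹' (qmap V '' W)) := by
    rw [hpre]
    exact isOpen_iUnion fun c =>
      hW.preimage ((continuous_subtype_val.const_smul (c : ℂ)).subtype_mk _)
  exact this

lemma qmap_isQuotientMap : Topology.IsQuotientMap (qmap V) :=
  qmap_isOpenMap.isQuotientMap qmap_cont qmap_surj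

variable {ι : Type} [Nonempty ι] [Finite ι]

/-- The subset `univ` as an element of `NES ι`. -/
def univI (ι : Type) [Nonempty ι] : NES ι := ⟨Set.univ, Set.univ_nonempty⟩

lemma pcoord_eq (p : PSp ι) (I : NES ι) {i : ι} (hi : i ∈ I.1) :
    pcoord ι p I.1 i = (p I).rep ⟨i, hi⟩ := by
  rw [pcoord, dif_pos ⟨I.2, hi⟩]

lemma pcoord_univ_eq (p : PSp ι) (i : ι) :
    pcoord ι p Set.univ i = (p (univI ι)).rep ⟨i, trivial⟩ :=
  pcoord_eq p (univI ι) trivial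

lemma mk_eq_mk_of {σ : Type} (v w : σ → ℂ) (hv : v ≠ 0) (hw : w ≠ 0) (a : ℂ)
    (h : ∀ i, v i = a * w i) : Projectivization.mk ℂ v hv = Projectivization.mk ℂ w hw :=
  (Projectivization.mk_eq_mk_iff' ℂ v w hv hw).mpr ⟨a, funext fun i => (h i).symm⟩

lemma proj_eq_of_reps {σ : Type} (x y : Projectivization ℂ (σ → ℂ)) (a : ℂ)
    (h : ∀ i, x.rep i = a * y.rep i) : x = y := by
  conv_lhs => rw [← x.mk_rep]
  conv_rhs => rw [← y.mk_rep]
  exact mk_eq_mk_of _ _ _ _ a h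

lemma rho_vec_ne (x : ↥(torusSet ι)) (I : NES ι) :
    (fun i : ↥I.1 => x.1.rep i.1) ≠ 0 := by
  obtain ⟨i, hi⟩ := I.2
  intro h0
  exact x.2 i (by simpa using congrFun h0 ⟨i, hi⟩)

lemma rho_rep (x : ↥(torusSet ι)) (I : NES ι) :
    ∃ c : ℂˣ, ∀ i : ↥I.1, (rho ι x I).rep i = (c : ℂ) * x.1.rep i.1 := by
  obtain ⟨c, hc⟩ := rep_mk _ (rho_vec_ne x I)
  refine ⟨c, fun i => ?_⟩
  have h : rho ι x I = Projectivization.mk ℂ (fun i : ↥I.1 => x.1.rep i.1) (rho_vec_ne x I) := rfl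
  rw [h, hc]
  rfl

lemma pcoord_rho (x : ↥(torusSet ι)) (I : NES ι) :
    ∃ c : ℂˣ, ∀ i, (hi : i ∈ I.1) → pcoord ι (rho ι x) I.1 i = (c : ℂ) * x.1.rep i := by
  obtain ⟨c, hc⟩ := rho_rep x I
  exact ⟨c, fun i hi => by rw [pcoord_eq _ I hi, hc]⟩

lemma mk_mem_torus {v : ι → ℂ} (hv : v ≠ 0) (h : ∀ i, v i ≠ 0) :
    Projectivization.mk ℂ v hv ∈ torusSet ι := by
  obtain ⟨c, hc⟩ := rep_mk v hv
  intro i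
  have : (Projectivization.mk ℂ v hv).rep i = (c : ℂ) * v i := by rw [hc]; rfl
  rw [this]
  exact mul_ne_zero c.ne_zero (h i)

lemma torus_coord_ne {v : ι → ℂ} (hv : v ≠ 0) (h : Projectivization.mk ℂ v hv ∈ torusSet ι) :
    ∀ i, v i ≠ 0 := by
  obtain ⟨c, hc⟩ := rep_mk v hv
  intro i hvi
  refine h i ?_
  have : (Projectivization.mk ℂ v hv).rep i = (c : ℂ) * v i := by rw [hc]; rfl
  rw [this, hvi, mul_zero]

lemma qmap_mem_torus_iff (v : {v : ι → ℂ // v ≠ 0}) :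
    qmap (ι → ℂ) v ∈ torusSet ι ↔ ∀ i, v.1 i ≠ 0 := by
  constructor
  · exact fun h => torus_coord_ne v.2 h
  · exact fun h => mk_mem_torus v.2 h

lemma isOpen_torusSet : IsOpen (torusSet ι) := by
  rw [← qmap_isQuotientMap.isOpen_preimage]
  have h1 : qmap (ι → ℂ) ⁻¹' torusSet ι = ⋂ i, {v : {v : ι → ℂ // v ≠ 0} | v.1 i ≠ 0} := by
    ext v
    simpa using qmap_mem_torus_iff v
  rw [h1]
  exact isOpen_iInter_of_finite fun i =>
    isOpen_compl_singleton.preimage ((continuous_apply i).comp continuous_subtype_val)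

lemma pre_coord_ne (v : ↥(qmap (ι → ℂ) ⁻¹' torusSet ι)) (i : ι) : v.1.1 i ≠ 0 :=
  torus_coord_ne v.1.2 v.2 i

lemma restr_vec_ne (I : NES ι) (v : ↥(qmap (ι → ℂ) ⁻¹' torusSet ι)) :
    (fun i : ↥I.1 => v.1.1 i.1) ≠ 0 := by
  obtain ⟨i, hi⟩ := I.2
  intro h0
  exact pre_coord_ne v i (congrFun h0 ⟨i, hi⟩)

lemma rho_comp_eq (v : ↥(qmap (ι → ℂ) ⁻¹' torusSet ι)) (I : NES ι) :
    rho ι ((torusSet ι).restrictPreimage (qmap (ι → ℂ)) v) I =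
      Projectivization.mk ℂ (fun i : ↥I.1 => v.1.1 i.1) (restr_vec_ne I v) := by
  set x : ↥(torusSet ι) := (torusSet ι).restrictPreimage (qmap (ι → ℂ)) v with hx
  have hx1 : x.1 = Projectivization.mk ℂ v.1.1 v.1.2 := rfl
  obtain ⟨c, hc⟩ := rep_mk v.1.1 v.1.2
  have hrep : ∀ i, x.1.rep i = (c : ℂ) * v.1.1 i := by
    intro i
    rw [hx1, hc]
    rfl
  have h : rho ι x I = Projectivization.mk ℂ (fun i : ↥I.1 => x.1.rep i.1) (rho_vec_ne x I) :=
    rfl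
  rw [h]
  exact mk_eq_mk_of _ _ _ _ (c : ℂ) fun i => hrep i.1

lemma rho_continuous : Continuous (rho ι) := by
  rw [(qmap_isQuotientMap.restrictPreimage_isOpen isOpen_torusSet).continuous_iff]
  refine continuous_pi fun I => ?_
  have h : (fun v : ↥(qmap (ι → ℂ) ⁻¹' torusSet ι) =>
      rho ι ((torusSet ι).restrictPreimage (qmap (ι → ℂ)) v) I) =
      (qmap (↥I.1 → ℂ)) ∘ (fun v => ⟨fun i : ↥I.1 => v.1.1 i.1, restr_vec_ne I v⟩) :=
    funext fun v => rho_comp_eq v I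
  show Continuous ((fun p : PSp ι => p I) ∘ _)
  simp only [Function.comp_def]
  rw [show (fun v : ↥(qmap (ι → ℂ) ⁻¹' torusSet ι) =>
      rho ι ((torusSet ι).restrictPreimage (qmap (ι → ℂ)) v) I) =
      (qmap (↥I.1 → ℂ)) ∘ (fun v => ⟨fun i : ↥I.1 => v.1.1 i.1, restr_vec_ne I v⟩) from h]
  exact qmap_cont.comp (Continuous.subtype_mk (continuous_pi fun i =>
    (continuous_apply i.1).comp (continuous_subtype_val.comp continuous_subtype_val)) _)

def toUniv (ι : Type) [Nonempty ι] :
    Projectivization ℂ (↥(Set.univ : Set ι) → ℂ) → Projectivization ℂ (ι → ℂ) :=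
  Projectivization.lift
    (fun u => Projectivization.mk ℂ (fun i => u.1 ⟨i, trivial⟩)
      (fun h0 => u.2 (funext fun j => by simpa using congrFun h0 j.1)))
    (by
      intro a b t h
      have ht : t ≠ 0 := by
        rintro rfl
        exact a.2 (by rw [h, zero_smul])
      exact mk_eq_mk_of _ _ _ _ t fun i => by
        have := congrFun h ⟨i, trivial⟩
        simpa using this)

lemma toUniv_continuous : Continuous (toUniv ι) := by
  rw [qmap_isQuotientMap.continuous_iff]
  have h : toUniv ι ∘ qmap (↥(Set.univ : Set ι) → ℂ) = (qmap (ι → ℂ)) ∘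
      (fun u : {u : ↥(Set.univ : Set ι) → ℂ // u ≠ 0} =>
        ⟨fun i => u.1 ⟨i, trivial⟩, fun h0 => u.2 (funext fun j => by simpa using congrFun h0 j.1)⟩) :=
    rfl
  rw [h]
  refine qmap_cont.comp (Continuous.subtype_mk (continuous_pi fun i => ?_) _)
  exact (continuous_apply (⟨i, trivial⟩ : ↥(Set.univ : Set ι))).comp continuous_subtype_val

def gmap (ι : Type) [Nonempty ι] : PSp ι → Projectivization ℂ (ι → ℂ) :=
  fun p => toUniv ι (p (univI ι))

lemma gmap_continuous : Continuous (gmap ι) := toUniv_continuous.comp (continuous_apply _)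

lemma gmap_rho (x : ↥(torusSet ι)) : gmap ι (rho ι x) = x.1 := x.1.mk_rep

lemma rho_injective : Function.Injective (rho ι) := fun x y h =>
  Subtype.ext (by rw [← gmap_rho x, ← gmap_rho y, h])

lemma rho_isEmbedding : Topology.IsEmbedding (rho ι) := by
  refine Topology.IsEmbedding.of_comp rho_continuous gmap_continuous ?_
  have h : gmap ι ∘ rho ι = Subtype.val := funext gmap_rho
  rw [h]
  exact Topology.IsEmbedding.subtypeVal

lemma units_cancel_iff (c d : ℂˣ) (a b a' b' : ℂ) :
    ((c : ℂ) * a) * ((d : ℂ) * b) = ((c : ℂ) * a') * ((d : ℂ) * b') ↔ a * b = a' * b' := by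
  rw [show ((c : ℂ) * a) * ((d : ℂ) * b) = ((c : ℂ) * (d : ℂ)) * (a * b) by ring,
    show ((c : ℂ) * a') * ((d : ℂ) * b') = ((c : ℂ) * (d : ℂ)) * (a' * b') by ring,
    mul_right_inj' (mul_ne_zero c.ne_zero d.ne_zero)]

lemma yn_rel (p : PSp ι) (hp : p ∈ Yn ι) (I : NES ι) (i j : ι) (hi : i ∈ I.1) (hj : j ∈ I.1) :
    pcoord ι p Set.univ i * pcoord ι p I.1 j = pcoord ι p Set.univ j * pcoord ι p I.1 i := by
  set W : Set (Projectivization ℂ (↥(univI ι).1 → ℂ) × Projectivization ℂ (↥I.1 → ℂ)) :=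
    {xy | xy.1.rep ⟨i, trivial⟩ * xy.2.rep ⟨j, hj⟩ = xy.1.rep ⟨j, trivial⟩ * xy.2.rep ⟨i, hi⟩}
    with hW
  have hqq : Topology.IsQuotientMap
      (Prod.map (qmap (↥(univI ι).1 → ℂ)) (qmap (↥I.1 → ℂ))) :=
    (qmap_isOpenMap.prodMap qmap_isOpenMap).isQuotientMap (qmap_cont.prodMap qmap_cont)
      (qmap_surj.prodMap qmap_surj)
  have hWclosed : IsClosed W := by
    rw [← hqq.isClosed_preimage]
    have hpre : Prod.map (qmap (↥(univI ι).1 → ℂ)) (qmap (↥I.1 → ℂ)) ⁻¹' W =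
        {vw : {v : ↥(univI ι).1 → ℂ // v ≠ 0} × {w : ↥I.1 → ℂ // w ≠ 0} |
          vw.1.1 ⟨i, trivial⟩ * vw.2.1 ⟨j, hj⟩ = vw.1.1 ⟨j, trivial⟩ * vw.2.1 ⟨i, hi⟩} := by
      ext ⟨v, w⟩
      obtain ⟨c, hc⟩ := rep_mk v.1 v.2
      obtain ⟨d, hd⟩ := rep_mk w.1 w.2
      have hcv : ∀ a, (qmap _ v).rep a = (c : ℂ) * v.1 a := fun a => by rw [show qmap _ v = Projectivization.mk ℂ v.1 v.2 from rfl, hc]; rfl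
      have hdw : ∀ a, (qmap _ w).rep a = (d : ℂ) * w.1 a := fun a => by rw [show qmap _ w = Projectivization.mk ℂ w.1 w.2 from rfl, hd]; rfl
      simp only [Set.mem_preimage, Set.mem_setOf_eq, hW, Prod.map, hcv, hdw]
      exact units_cancel_iff c d _ _ _ _
    rw [hpre]
    refine isClosed_eq (Continuous.mul ?_ ?_) (Continuous.mul ?_ ?_)
    · exact (continuous_apply (⟨i, trivial⟩ : ↥(univI ι).1)).comp
        (continuous_subtype_val.comp continuous_fst)
    · exact (continuous_apply (⟨j, hj⟩ : ↥I.1)).comp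
        (continuous_subtype_val.comp continuous_snd)
    · exact (continuous_apply (⟨j, trivial⟩ : ↥(univI ι).1)).comp
        (continuous_subtype_val.comp continuous_fst)
    · exact (continuous_apply (⟨i, hi⟩ : ↥I.1)).comp
        (continuous_subtype_val.comp continuous_snd)
  have hZ : IsClosed ((fun p : PSp ι => (p (univI ι), p I)) ⁻¹' W) :=
    hWclosed.preimage ((continuous_apply _).prodMk (continuous_apply _))
  have hsub : Set.range (rho ι) ⊆ (fun p : PSp ι => (p (univI ι), p I)) ⁻¹' W := by
    rintro _ ⟨x, rfl⟩
    obtain ⟨c, hc⟩ := rho_rep x (univI ι)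
    obtain ⟨d, hd⟩ := rho_rep x I
    show (rho ι x (univI ι)).rep ⟨i, trivial⟩ * (rho ι x I).rep ⟨j, hj⟩ =
      (rho ι x (univI ι)).rep ⟨j, trivial⟩ * (rho ι x I).rep ⟨i, hi⟩
    rw [hc ⟨i, trivial⟩, hc ⟨j, trivial⟩, hd ⟨j, hj⟩, hd ⟨i, hi⟩]
    ring
  have hmem := closure_minimal hsub hZ hp
  simp only [Set.mem_preimage, hW, Set.mem_setOf_eq] at hmem
  rw [pcoord_univ_eq p i, pcoord_univ_eq p j, pcoord_eq p I hi, pcoord_eq p I hj]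
  exact hmem

lemma isOpen_U : IsOpen {p : PSp ι | ∀ i, pcoord ι p Set.univ i ≠ 0} := by
  have h : {p : PSp ι | ∀ i, pcoord ι p Set.univ i ≠ 0} =
      (fun p : PSp ι => p (univI ι)) ⁻¹'
        {x : Projectivization ℂ (↥(univI ι).1 → ℂ) | ∀ j, x.rep j ≠ 0} := by
    ext p
    simp only [Set.mem_setOf_eq, Set.mem_preimage]
    constructor
    · intro h j
      have h2 := h j.1
      rw [pcoord_univ_eq p j.1] at h2
      exact h2
    · intro h i
      rw [pcoord_univ_eq p i]
      exact h ⟨i, trivial⟩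
  rw [h]
  refine IsOpen.preimage (continuous_apply _) ?_
  rw [← qmap_isQuotientMap.isOpen_preimage]
  have h2 : qmap (↥(univI ι).1 → ℂ) ⁻¹' {x | ∀ j, x.rep j ≠ 0} =
      ⋂ j, {v : {v : ↥(univI ι).1 → ℂ // v ≠ 0} | v.1 j ≠ 0} := by
    ext v
    obtain ⟨c, hc⟩ := rep_mk v.1 v.2
    have hcv : ∀ a, (qmap _ v).rep a = (c : ℂ) * v.1 a := fun a => by
      rw [show qmap _ v = Projectivization.mk ℂ v.1 v.2 from rfl, hc]; rfl
    simp only [Set.mem_preimage, Set.mem_setOf_eq, Set.mem_iInter, hcv, mul_ne_zero_iff]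
    exact ⟨fun hh j => (hh j).2, fun hh j => ⟨c.ne_zero, hh j⟩⟩
  rw [h2]
  exact isOpen_iInter_of_finite fun j =>
    isOpen_compl_singleton.preimage ((continuous_apply j).comp continuous_subtype_val)

lemma range_eq_inter :
    Set.range (rho ι) = Yn ι ∩ {p : PSp ι | ∀ i, pcoord ι p Set.univ i ≠ 0} := by
  apply Set.Subset.antisymm
  · rintro _ ⟨x, rfl⟩
    refine ⟨subset_closure ⟨x, rfl⟩, fun i => ?_⟩
    obtain ⟨c, hc⟩ := rho_rep x (univI ι)
    rw [pcoord_univ_eq (rho ι x) i, hc ⟨i, trivial⟩]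
    exact mul_ne_zero c.ne_zero (x.2 i)
  · rintro p ⟨hY, hcoord⟩
    set u : ι → ℂ := fun i => pcoord ι p Set.univ i with hu
    have hune : ∀ i, u i ≠ 0 := hcoord
    have hu0 : u ≠ 0 := fun h => hune (Classical.arbitrary ι) (congrFun h _)
    refine ⟨⟨Projectivization.mk ℂ u hu0, mk_mem_torus hu0 hune⟩, ?_⟩
    set x : ↥(torusSet ι) := ⟨Projectivization.mk ℂ u hu0, mk_mem_torus hu0 hune⟩ with hxdef
    obtain ⟨c, hc⟩ := rep_mk u hu0
    have hxrep : ∀ i, x.1.rep i = (c : ℂ) * u i := fun i => by rw [hxdef, hc]; rfl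
    funext I
    obtain ⟨i0, hi0, hne0⟩ := pcoord_exists_ne ι p I.1 I.2
    have key : ∀ j, (hj : j ∈ I.1) →
        pcoord ι p I.1 j = (pcoord ι p I.1 i0 / u i0) * u j := by
      intro j hj
      have hrel := yn_rel p hY I i0 j hi0 hj
      rw [div_mul_eq_mul_div, eq_div_iff (hune i0)]
      linear_combination hrel
    have hrho : rho ι x I =
        Projectivization.mk ℂ (fun i : ↥I.1 => x.1.rep i.1) (rho_vec_ne x I) := rfl
    rw [hrho]
    conv_rhs => rw [← (p I).mk_rep]
    refine mk_eq_mk_of _ _ _ _ ((c : ℂ) * (u i0 / pcoord ι p I.1 i0)) fun i => ?_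
    have h1 : (p I).rep i = pcoord ι p I.1 i.1 := (pcoord_eq p I i.2).symm
    rw [hxrep i.1, h1, key i.1 i.2]
    have h2 : u i0 ≠ 0 := hune i0
    field_simp

lemma chainK_one_iff (p : PSp ι) :
    chainK ι p 1 = ∅ ↔ ∀ i, pcoord ι p Set.univ i ≠ 0 := by
  rw [show chainK ι p 1 = {k ∈ chainK ι p 0 | pcoord ι p (chainK ι p 0) k = 0} from rfl,
    show chainK ι p 0 = Set.univ from rfl]
  rw [Set.eq_empty_iff_forall_notMem]
  simp

lemma act_vec_ne (t : ↥(torusSet ι)) (p : PSp ι) (I : NES ι) :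
    (fun i : ↥I.1 => t.1.rep i.1 * (p I).rep i) ≠ 0 := by
  intro h0
  obtain ⟨i, hi⟩ := Function.ne_iff.mp (Projectivization.rep_nonzero (p I))
  exact mul_ne_zero (t.2 i.1) (by simpa using hi) (by simpa using congrFun h0 i)

lemma act_rep (t : ↥(torusSet ι)) (p : PSp ι) (I : NES ι) :
    ∃ c : ℂˣ, ∀ i : ↥I.1, (act ι t p I).rep i = (c : ℂ) * (t.1.rep i.1 * (p I).rep i) := by
  obtain ⟨c, hc⟩ := rep_mk _ (act_vec_ne t p I)
  refine ⟨c, fun i => ?_⟩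
  have h : act ι t p I = Projectivization.mk ℂ (fun i : ↥I.1 => t.1.rep i.1 * (p I).rep i)
      (act_vec_ne t p I) := rfl
  rw [h, hc]
  rfl

lemma torus_ext (t1 t2 : ↥(torusSet ι)) (a : ℂ) (h : ∀ i, t1.1.rep i = a * t2.1.rep i) :
    t1 = t2 := Subtype.ext (proj_eq_of_reps t1.1 t2.1 a h)

lemma part5 (t x : ↥(torusSet ι)) : ∃ y : ↥(torusSet ι), act ι t (rho ι x) = rho ι y := by
  set w : ι → ℂ := fun i => t.1.rep i * x.1.rep i with hwdef
  have hwne : ∀ i, w i ≠ 0 := fun i => mul_ne_zero (t.2 i) (x.2 i)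
  have hw0 : w ≠ 0 := fun h => hwne (Classical.arbitrary ι) (congrFun h _)
  obtain ⟨d, hd⟩ := rep_mk w hw0
  set y : ↥(torusSet ι) := ⟨Projectivization.mk ℂ w hw0, mk_mem_torus hw0 hwne⟩ with hydef
  have hyrep : ∀ i, y.1.rep i = (d : ℂ) * w i := fun i => by
    show (Projectivization.mk ℂ w hw0).rep i = _
    rw [hd]; rfl
  refine ⟨y, funext fun I => ?_⟩
  obtain ⟨c1, hc1⟩ := act_rep t (rho ι x) I
  obtain ⟨c2, hc2⟩ := rho_rep x I
  obtain ⟨c3, hc3⟩ := rho_rep y I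
  refine proj_eq_of_reps _ _ ((c1 : ℂ) * c2 / ((c3 : ℂ) * d)) fun i => ?_
  rw [hc1 i, hc2 i, hc3 i, hyrep i.1]
  have h3 : (c3 : ℂ) ≠ 0 := c3.ne_zero
  have h4 : (d : ℂ) ≠ 0 := d.ne_zero
  field_simp [hwdef]
  ring

lemma part6 (x y : ↥(torusSet ι)) : ∃! t : ↥(torusSet ι), act ι t (rho ι x) = rho ι y := by
  set w : ι → ℂ := fun i => y.1.rep i / x.1.rep i with hwdef
  have hwne : ∀ i, w i ≠ 0 := fun i => div_ne_zero (y.2 i) (x.2 i)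
  have hw0 : w ≠ 0 := fun h => hwne (Classical.arbitrary ι) (congrFun h _)
  obtain ⟨d, hd⟩ := rep_mk w hw0
  set t0 : ↥(torusSet ι) := ⟨Projectivization.mk ℂ w hw0, mk_mem_torus hw0 hwne⟩ with ht0def
  have ht0rep : ∀ i, t0.1.rep i = (d : ℂ) * w i := fun i => by
    show (Projectivization.mk ℂ w hw0).rep i = _
    rw [hd]; rfl
  have hmain : act ι t0 (rho ι x) = rho ι y := by
    funext I
    obtain ⟨c1, hc1⟩ := act_rep t0 (rho ι x) I
    obtain ⟨c2, hc2⟩ := rho_rep x I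
    obtain ⟨c3, hc3⟩ := rho_rep y I
    refine proj_eq_of_reps _ _ ((c1 : ℂ) * (d : ℂ) * (c2 : ℂ) / (c3 : ℂ)) fun i => ?_
    rw [hc1 i, hc2 i, hc3 i, ht0rep i.1]
    have h3 : (c3 : ℂ) ≠ 0 := c3.ne_zero
    have hx : x.1.rep i.1 ≠ 0 := x.2 i.1
    field_simp [hwdef]
    rw [hwdef]; field_simp
  refine ⟨t0, hmain, fun t ht => ?_⟩
  have heq := congrFun (ht.trans hmain.symm) (univI ι)
  obtain ⟨c1, hc1⟩ := act_rep t (rho ι x) (univI ι)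
  obtain ⟨c1', hc1'⟩ := act_rep t0 (rho ι x) (univI ι)
  obtain ⟨c2, hc2⟩ := rho_rep x (univI ι)
  refine torus_ext t t0 ((c1' : ℂ) / (c1 : ℂ)) fun i => ?_
  have h1 := hc1 ⟨i, trivial⟩
  rw [heq, hc1' ⟨i, trivial⟩] at h1
  have hr : (rho ι x (univI ι)).rep ⟨i, trivial⟩ ≠ 0 := by
    rw [hc2 ⟨i, trivial⟩]
    exact mul_ne_zero c2.ne_zero (x.2 i)
  have h2 : (c1' : ℂ) * t0.1.rep i = (c1 : ℂ) * t.1.rep i :=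
    mul_right_cancel₀ hr (by linear_combination h1)
  rw [div_mul_eq_mul_div, eq_div_iff c1.ne_zero]
  linear_combination -h2

end Stmt9Aux

end Stmt9Aux
/-- `ρ` is a homeomorphism from `T_n` onto its image; the image `ρ(T_n)` is an open and
dense subset of `Y_n`; the torus action preserves `ρ(T_n)` and is simply transitive on
it; and `ρ(T_n) = O_{[n],∅}` is the set of points of `Y_n` whose chain is `[n] ⊋ ∅`. -/
theorem stmt9 (n : ℕ) (hn : 1 ≤ n) :
    Topology.IsEmbedding (rho (Fin n)) ∧
    IsOpen (Subtype.val ⁻¹' Set.range (rho (Fin n)) : Set ↥(Yn (Fin n))) ∧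
    Set.range (rho (Fin n)) ⊆ Yn (Fin n) ∧
    closure (Set.range (rho (Fin n))) = Yn (Fin n) ∧
    (∀ (t : ↥(torusSet (Fin n))) (x : ↥(torusSet (Fin n))),
      ∃ y : ↥(torusSet (Fin n)), act (Fin n) t (rho (Fin n) x) = rho (Fin n) y) ∧
    (∀ x y : ↥(torusSet (Fin n)),
      ∃! t : ↥(torusSet (Fin n)), act (Fin n) t (rho (Fin n) x) = rho (Fin n) y) ∧
    Set.range (rho (Fin n)) = {p ∈ Yn (Fin n) | chainK (Fin n) p 1 = ∅} := by
  have hne : Nonempty (Fin n) := ⟨⟨0, lt_of_lt_of_le zero_lt_one hn⟩⟩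
  have hrange := Stmt9Aux.range_eq_inter (ι := Fin n)
  refine ⟨Stmt9Aux.rho_isEmbedding, ?_, subset_closure, rfl, Stmt9Aux.part5, Stmt9Aux.part6, ?_⟩
  · have h : Subtype.val ⁻¹' Set.range (rho (Fin n)) =
        (Subtype.val : ↥(Yn (Fin n)) → PSp (Fin n)) ⁻¹'
          {p | ∀ i, pcoord (Fin n) p Set.univ i ≠ 0} := by
      ext q
      simp only [Set.mem_preimage]
      rw [hrange]
      exact ⟨fun h => h.2, fun h => ⟨q.2, h⟩⟩
    rw [h]
    exact Stmt9Aux.isOpen_U.preimage continuous_subtype_val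
  · rw [hrange]
    ext p
    simp only [Set.mem_inter_iff, Set.mem_setOf_eq, Stmt9Aux.chainK_one_iff]
end
end
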